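/- Let ω be a tempered distribution on ℝ^d whose Fourier transform ω̂ = f·λ is an absolutely continuous translation bounded measure with density f ∈ L¹_loc(ℝ^d). Then for every Schwartz function g on ℝ^d, the product ĝ·f lies in L¹(ℝ^d), and consequently g * ω ∈ C_0(ℝ^d), i.e. g * ω is continuous and vanishes at infinity. -/

import Mathlib

open Real MeasureTheory SchwartzMap Filter
open scoped FourierTransform RealInnerProductSpace ENNReal

private lemma schwartz_mul_integrable {d : ℕ} (f : EuclideanSpace ℝ (Fin d) → ℂ)
    (hloc : LocallyIntegrable f volume)
    (hM : (⨆ t : EuclideanSpace ℝ (Fin d),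
        ∫⁻ x in (fun x => t + x) '' Metric.closedBall 0 1, ‖f x‖₊ ∂volume) < ⊤)
    (φ : SchwartzMap (EuclideanSpace ℝ (Fin d)) ℂ) :
    Integrable (fun y => φ y * f y) volume := by
  classical
  have himg : ∀ t : EuclideanSpace ℝ (Fin d),
      (fun x => t + x) '' Metric.closedBall 0 1 = Metric.closedBall t 1 := by
    intro t
    ext x
    simp only [Set.mem_image, Metric.mem_closedBall, dist_eq_norm, sub_zero]
    constructor
    · rintro ⟨y, hy, rfl⟩
      simpa using hy
    · intro hx
      exact ⟨x - t, hx, by abel⟩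
  -- Schwartz decay bound
  obtain ⟨C, hC0, hC⟩ : ∃ C : ℝ, 0 ≤ C ∧ ∀ y, (1 + ‖y‖) ^ (d + 1) * ‖φ y‖ ≤ C := by
    refine ⟨2 ^ (d + 1) * (Finset.Iic ((d + 1), 0)).sup
      (fun m => SchwartzMap.seminorm ℝ m.1 m.2) φ,
      mul_nonneg (by positivity) (apply_nonneg _ _), fun y => ?_⟩
    simpa [norm_iteratedFDeriv_zero] using
      SchwartzMap.one_add_le_sup_seminorm_apply (𝕜 := ℝ) (m := (d + 1, 0)) le_rfl le_rfl φ y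
  set D : ℝ := 2 ^ (d + 1) * C with hDdef
  have hD0 : 0 ≤ D := by positivity
  have hpt : ∀ t y : EuclideanSpace ℝ (Fin d), y ∈ Metric.closedBall t 1 →
      ‖φ y‖ ≤ D * (1 + ‖t‖) ^ (-(d + 1 : ℝ)) := by
    intro t y hy
    have h1y : (0:ℝ) < 1 + ‖y‖ := by positivity
    have h1t : (0:ℝ) < 1 + ‖t‖ := by positivity
    have hd1 : ‖y - t‖ ≤ 1 := by simpa [dist_eq_norm] using hy
    have hty : 1 + ‖t‖ ≤ 2 * (1 + ‖y‖) := by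
      have h2 := norm_sub_norm_le t y
      have h3 : ‖t - y‖ ≤ 1 := by rwa [norm_sub_rev]
      have h4 := norm_nonneg y
      linarith
    have hpow : (1 + ‖t‖) ^ (d + 1) ≤ 2 ^ (d + 1) * (1 + ‖y‖) ^ (d + 1) := by
      calc (1 + ‖t‖) ^ (d + 1) ≤ (2 * (1 + ‖y‖)) ^ (d + 1) :=
            pow_le_pow_left₀ h1t.le hty _
        _ = 2 ^ (d + 1) * (1 + ‖y‖) ^ (d + 1) := mul_pow _ _ _
    have hb : (1 + ‖t‖) ^ (d + 1) * ‖φ y‖ ≤ D := by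
      calc (1 + ‖t‖) ^ (d + 1) * ‖φ y‖
          ≤ (2 ^ (d + 1) * (1 + ‖y‖) ^ (d + 1)) * ‖φ y‖ :=
            mul_le_mul_of_nonneg_right hpow (norm_nonneg _)
        _ = 2 ^ (d + 1) * ((1 + ‖y‖) ^ (d + 1) * ‖φ y‖) := by ring
        _ ≤ 2 ^ (d + 1) * C := by
            exact mul_le_mul_of_nonneg_left (hC y) (by positivity)
    have hrw : (1 + ‖t‖) ^ (-(d + 1 : ℝ)) = ((1 + ‖t‖) ^ (d + 1))⁻¹ := by
      rw [show (-(d + 1 : ℝ)) = -((d + 1 : ℕ) : ℝ) by push_cast; ring,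
        Real.rpow_neg h1t.le, Real.rpow_natCast]
    rw [hrw, ← div_eq_mul_inv, le_div_iff₀ (by positivity)]
    linarith [hb]
  set M := (⨆ t : EuclideanSpace ℝ (Fin d),
      ∫⁻ x in (fun x => t + x) '' Metric.closedBall 0 1, ‖f x‖₊ ∂volume) with hMdef
  have hfa : AEMeasurable (fun y => (‖f y‖₊ : ℝ≥0∞)) volume := hloc.aestronglyMeasurable.aemeasurable.enorm
  set fm := hfa.mk _ with hfmdef
  have hfm : Measurable fm := hfa.measurable_mk
  have hfe : (fun y => (‖f y‖₊ : ℝ≥0∞)) =ᵐ[volume] fm := hfa.ae_eq_mk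
  set φn : EuclideanSpace ℝ (Fin d) → ℝ≥0∞ := fun y => (‖φ y‖₊ : ℝ≥0∞) with hφndef
  have hφn : Measurable φn := φ.continuous.measurable.enorm
  set G : EuclideanSpace ℝ (Fin d) → ℝ≥0∞ := fun y => φn y * fm y with hGdef
  have hG : Measurable G := hφn.mul hfm
  set B : EuclideanSpace ℝ (Fin d) → ℝ≥0∞ :=
    fun t => ENNReal.ofReal (D * (1 + ‖t‖) ^ (-(d + 1 : ℝ))) with hBdef
  -- inner estimate
  have hinner : ∀ t, ∫⁻ y in Metric.closedBall t 1, G y ∂volume ≤ B t * M := by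
    intro t
    have h1 : ∫⁻ y in Metric.closedBall t 1, G y ∂volume
        ≤ ∫⁻ y in Metric.closedBall t 1, B t * fm y ∂volume := by
      refine setLIntegral_mono' measurableSet_closedBall ?_
      · intro y hy
        refine mul_le_mul_left ?_ _
        calc φn y = ENNReal.ofReal ‖φ y‖ := (ofReal_norm_eq_enorm _).symm
          _ ≤ B t := ENNReal.ofReal_le_ofReal (hpt t y hy)
    have h2 : ∫⁻ y in Metric.closedBall t 1, B t * fm y ∂volume
        = B t * ∫⁻ y in Metric.closedBall t 1, fm y ∂volume :=
      lintegral_const_mul' _ _ ENNReal.ofReal_ne_top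
    have h3 : ∫⁻ y in Metric.closedBall t 1, fm y ∂volume
        = ∫⁻ y in Metric.closedBall t 1, (‖f y‖₊ : ℝ≥0∞) ∂volume :=
      lintegral_congr_ae (ae_restrict_of_ae hfe.symm)
    have h4 : ∫⁻ y in Metric.closedBall t 1, (‖f y‖₊ : ℝ≥0∞) ∂volume ≤ M := by
      rw [← himg t]
      exact le_iSup (fun t => ∫⁻ x in (fun x => t + x) '' Metric.closedBall 0 1,
        (‖f x‖₊ : ℝ≥0∞) ∂volume) t
    refine h1.trans ?_
    rw [h2, h3]
    exact mul_le_mul_right h4 _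
  -- Fubini / averaging argument
  set S : Set (EuclideanSpace ℝ (Fin d) × EuclideanSpace ℝ (Fin d)) :=
    {p | dist p.1 p.2 ≤ 1} with hSdef
  have hS : MeasurableSet S := (isClosed_le continuous_dist continuous_const).measurableSet
  set c := volume (Metric.closedBall (0 : EuclideanSpace ℝ (Fin d)) 1) with hcdef
  have hc0 : c ≠ 0 := (Metric.measure_closedBall_pos volume 0 one_pos).ne'
  have hcT : c ≠ ⊤ := measure_closedBall_lt_top.ne
  have hswap : ∫⁻ y, G y * c ∂volume
      = ∫⁻ t, ∫⁻ y in Metric.closedBall t 1, G y ∂volume ∂volume := by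
    have step1 : ∀ y, G y * c = ∫⁻ t, G y * S.indicator 1 (y, t) ∂volume := by
      intro y
      rw [lintegral_const_mul (G y)
        (show Measurable fun t : EuclideanSpace ℝ (Fin d) => S.indicator 1 (y, t) from
          (measurable_one.indicator hS).comp measurable_prodMk_left)]
      congr 1
      have : ∀ t, S.indicator
            (1 : EuclideanSpace ℝ (Fin d) × EuclideanSpace ℝ (Fin d) → ℝ≥0∞) (y, t)
          = (Metric.closedBall y 1).indicator 1 t := by
        intro t
        simp only [Set.indicator_apply, hSdef, Set.mem_setOf_eq, Metric.mem_closedBall,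
          dist_comm t y, Pi.one_apply]
      rw [lintegral_congr this, lintegral_indicator_one measurableSet_closedBall]
      exact (Measure.addHaar_closedBall_center _ _ _).symm
    have step2 : ∀ t, ∫⁻ y, G y * S.indicator 1 (y, t) ∂volume
        = ∫⁻ y in Metric.closedBall t 1, G y ∂volume := by
      intro t
      rw [← lintegral_indicator measurableSet_closedBall]
      congr 1
      funext y
      by_cases hy : dist y t ≤ 1
      · simp [Set.indicator_apply, hSdef, hy, Metric.mem_closedBall]
      · simp [Set.indicator_apply, hSdef, hy, Metric.mem_closedBall]
    calc ∫⁻ y, G y * c ∂volume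
        = ∫⁻ y, ∫⁻ t, G y * S.indicator 1 (y, t) ∂volume ∂volume := by
          exact lintegral_congr step1
      _ = ∫⁻ t, ∫⁻ y, G y * S.indicator 1 (y, t) ∂volume ∂volume := by
          apply lintegral_lintegral_swap
          exact ((hG.comp measurable_fst).mul (measurable_one.indicator hS)).aemeasurable
      _ = ∫⁻ t, ∫⁻ y in Metric.closedBall t 1, G y ∂volume ∂volume := lintegral_congr step2
  -- integrability of the bound
  have hIb : Integrable (fun t : EuclideanSpace ℝ (Fin d) =>
      D * (1 + ‖t‖) ^ (-(d + 1 : ℝ))) volume := by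
    refine (integrable_one_add_norm ?_).const_mul D
    rw [finrank_euclideanSpace_fin]
    exact_mod_cast lt_add_one (d : ℝ)
  have hI : ∫⁻ t, B t ∂volume < ⊤ := by
    refine lt_of_le_of_lt (lintegral_mono fun t => ?_) hIb.2
    rw [Real.enorm_eq_ofReal_abs]
    exact ENNReal.ofReal_le_ofReal (le_abs_self _)
  have htot : (∫⁻ y, G y ∂volume) * c < ⊤ := by
    calc (∫⁻ y, G y ∂volume) * c = ∫⁻ y, G y * c ∂volume :=
          (lintegral_mul_const' c _ hcT).symm
      _ = ∫⁻ t, ∫⁻ y in Metric.closedBall t 1, G y ∂volume ∂volume := hswap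
      _ ≤ ∫⁻ t, B t * M ∂volume := lintegral_mono fun t => hinner t
      _ = (∫⁻ t, B t ∂volume) * M := lintegral_mul_const' M _ hM.ne
      _ < ⊤ := ENNReal.mul_lt_top hI hM
  have hGfin : ∫⁻ y, G y ∂volume < ⊤ := by
    by_contra h
    rw [not_lt, top_le_iff] at h
    rw [h, ENNReal.top_mul hc0] at htot
    exact (lt_irrefl _ htot).elim
  refine ⟨φ.continuous.aestronglyMeasurable.mul hloc.aestronglyMeasurable, ?_⟩
  have heq : ∫⁻ y, (‖φ y * f y‖₊ : ℝ≥0∞) ∂volume = ∫⁻ y, G y ∂volume := by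
    apply lintegral_congr_ae
    filter_upwards [hfe] with y hy
    rw [nnnorm_mul, ENNReal.coe_mul, hGdef]
    simp only [hφndef]
    rw [hy]
  rw [HasFiniteIntegral]
  exact heq.trans_lt hGfin

/-- Proposition 5.3: let `ω` be a tempered distribution on `ℝ^d` whose Fourier transform is the
absolutely continuous translation bounded measure `f·λ`. Then for every Schwartz function `g`,
`ĝ·f ∈ L¹(ℝ^d)`, and the convolution `g * ω : x ↦ ω(g(x − ·))` is in `C₀(ℝ^d)`. -/
theorem stmt9 (d : ℕ)
    (ω : SchwartzMap (EuclideanSpace ℝ (Fin d)) ℂ →L[ℂ] ℂ)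
    (f : EuclideanSpace ℝ (Fin d) → ℂ) (hloc : LocallyIntegrable f volume)
    (hTB : ∀ K : Set (EuclideanSpace ℝ (Fin d)), IsCompact K →
      (⨆ t : EuclideanSpace ℝ (Fin d),
        ∫⁻ x in (fun x => t + x) '' K, ‖f x‖₊ ∂volume) < ⊤)
    (hFT : ∀ φ : SchwartzMap (EuclideanSpace ℝ (Fin d)) ℂ,
      ω (SchwartzMap.fourierTransformCLM ℂ φ) = ∫ x, φ x * f x)
    (g : SchwartzMap (EuclideanSpace ℝ (Fin d)) ℂ) :
    Integrable (fun y => (SchwartzMap.fourierTransformCLM ℂ g) y * f y) volume ∧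
    ∀ F : EuclideanSpace ℝ (Fin d) → ℂ,
      (∀ x, ∃ gx : SchwartzMap (EuclideanSpace ℝ (Fin d)) ℂ,
        (∀ y, gx y = g (x - y)) ∧ F x = ω gx) →
      Continuous F ∧ Tendsto F (cocompact (EuclideanSpace ℝ (Fin d))) (nhds 0) := by
  have hInt : Integrable (fun y => (SchwartzMap.fourierTransformCLM ℂ g) y * f y) volume :=
    schwartz_mul_integrable f hloc
      (hTB (Metric.closedBall 0 1) (isCompact_closedBall _ _)) _
  set h : EuclideanSpace ℝ (Fin d) → ℂ :=
    fun y => (SchwartzMap.fourierTransformCLM ℂ g) y * f y with hhdef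
  refine ⟨hInt, fun F hF => ?_⟩
  -- identify F with the inverse Fourier transform of h
  have key : ∀ x, F x = 𝓕⁻ h x := by
    intro x
    obtain ⟨gx, hgx, hFx⟩ := hF x
    set φx := (SchwartzMap.fourierTransformCLE ℂ (SchwartzMap (EuclideanSpace ℝ (Fin d)) ℂ)).symm gx with hφxdef
    have h1 : SchwartzMap.fourierTransformCLM ℂ φx = gx := by
      have h2 := (SchwartzMap.fourierTransformCLE ℂ (SchwartzMap (EuclideanSpace ℝ (Fin d)) ℂ)).apply_symm_apply gx
      ext y
      rw [← h2]
      rfl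
    have hφx : ∀ y, φx y = Complex.exp ((2 * π * ⟪x, y⟫ : ℝ) * Complex.I) * 𝓕 (⇑g) y := by
      intro y
      have e1 : ⇑φx = 𝓕⁻ ⇑gx := SchwartzMap.fourierInv_coe gx
      have e2 : 𝓕⁻ (⇑gx) y
          = ∫ t, Complex.exp ((2 * π * ⟪t, y⟫ : ℝ) * Complex.I) • gx t :=
        Real.fourierInv_eq' _ _
      have e3 : (∫ t, Complex.exp ((2 * π * ⟪t, y⟫ : ℝ) * Complex.I) • gx t)
          = ∫ t, Complex.exp ((2 * π * ⟪x - t, y⟫ : ℝ) * Complex.I) • g t := by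
        have := MeasureTheory.integral_sub_left_eq_self
          (μ := (volume : Measure (EuclideanSpace ℝ (Fin d))))
          (fun t => Complex.exp ((2 * π * ⟪x - t, y⟫ : ℝ) * Complex.I) • g t) x
        rw [← this]
        congr 1
        funext t
        rw [hgx t]
        have hxt : x - (x - t) = t := by abel
        rw [hxt]
      have e4 : (∫ t, Complex.exp ((2 * π * ⟪x - t, y⟫ : ℝ) * Complex.I) • g t)
          = Complex.exp ((2 * π * ⟪x, y⟫ : ℝ) * Complex.I) •
            ∫ t, Complex.exp (((-2) * π * ⟪t, y⟫ : ℝ) * Complex.I) • g t := by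
        rw [← integral_smul]
        congr 1
        funext t
        rw [smul_smul, smul_eq_mul, ← Complex.exp_add]
        congr 2
        rw [inner_sub_left]
        push_cast
        ring
      have e5 : (∫ t, Complex.exp (((-2) * π * ⟪t, y⟫ : ℝ) * Complex.I) • g t) = 𝓕 (⇑g) y := by
        rw [Real.fourier_eq']
      rw [e1, e2, e3, e4, e5, smul_eq_mul]

    have hsum : F x = ∫ y, Complex.exp ((2 * π * ⟪y, x⟫ : ℝ) * Complex.I) • h y := by
      rw [hFx, ← h1, hFT φx]
      congr 1
      funext y
      rw [hφx y, smul_eq_mul, hhdef]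
      simp only [SchwartzMap.fourierTransformCLM_apply, SchwartzMap.fourier_coe]
      rw [real_inner_comm x y]
      ring
    rw [hsum, Real.fourierInv_eq']
  have hLcont : Continuous fun p : EuclideanSpace ℝ (Fin d) × EuclideanSpace ℝ (Fin d) =>
      (-(innerₗ (EuclideanSpace ℝ (Fin d)))) p.1 p.2 := by
    exact (continuous_inner
      (𝕜 := ℝ) (E := EuclideanSpace ℝ (Fin d))).neg
  have hcont : Continuous (𝓕⁻ h) :=
    VectorFourier.fourierIntegral_continuous Real.continuous_fourierChar hLcont hInt
  have hRL : Tendsto (𝓕 h) (cocompact (EuclideanSpace ℝ (Fin d))) (nhds 0) :=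
    tendsto_integral_exp_inner_smul_cocompact h
  have hnegT : Tendsto (fun x : EuclideanSpace ℝ (Fin d) => -x)
      (cocompact (EuclideanSpace ℝ (Fin d))) (cocompact (EuclideanSpace ℝ (Fin d))) :=
    (Homeomorph.neg (EuclideanSpace ℝ (Fin d))).toCocompactMap.cocompact_tendsto'
  have hRLinv : Tendsto (𝓕⁻ h) (cocompact (EuclideanSpace ℝ (Fin d))) (nhds 0) := by
    have := hRL.comp hnegT
    refine this.congr fun x => ?_
    exact (Real.fourierInv_eq_fourier_neg h x).symm
  exact ⟨hcont.congr fun x => (key x).symm, hRLinv.congr fun x => (key x).symm⟩
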